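/- Let μ be the Haldane kinetic function μ(S) := M·S/(K + S + a·S²) with constants M, K, a > 0, and let p0 > 0, b > 0, D* > 0, S_in > 0 and S* ∈ (0, S_in) satisfy p0·μ(S*) = b + D* and p0·μ(S_in) < b. Then there exists S̄ ∈ (S*, S_in) such that p0·μ(S_in) < p0·μ(S̄) < b and μ'(S) ≤ 0 for all S ∈ [S̄, S_in]. -/

import Mathlib

lemma haldane_mono (M K a : ℝ) (hM : 0 < M) (hK : 0 < K) (ha : 0 < a)
    (x y : ℝ) (hx : 0 ≤ x) (hxy : x < y) (h : a * (x * y) < K) :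
    M * x / (K + x + a * x^2) < M * y / (K + y + a * y^2) := by
  have hy : 0 ≤ y := hx.trans hxy.le
  have hdx : 0 < K + x + a * x^2 := by positivity
  have hdy : 0 < K + y + a * y^2 := by positivity
  rw [div_lt_div_iff₀ hdx hdy]
  nlinarith [mul_pos hM (sub_pos.mpr hxy), sq_nonneg (x - y)]

theorem stmt_11
    (M K a : ℝ) (hM : 0 < M) (hK : 0 < K) (ha : 0 < a)
    (μ : ℝ → ℝ) (hμ : ∀ S : ℝ, 0 ≤ S → μ S = M * S / (K + S + a * S^2))
    (p0 b Dstar S_in Sstar : ℝ)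
    (hp0 : 0 < p0) (hb : 0 < b) (hDstar : 0 < Dstar) (hSin : 0 < S_in)
    (hSstar : Sstar ∈ Set.Ioo 0 S_in)
    (heq : p0 * μ Sstar = b + Dstar)
    (hless : p0 * μ S_in < b) :
    ∃ Sbar ∈ Set.Ioo Sstar S_in,
      p0 * μ S_in < p0 * μ Sbar ∧ p0 * μ Sbar < b ∧
      ∀ S ∈ Set.Icc Sbar S_in, deriv μ S ≤ 0 := by
  obtain ⟨hS0, hSlt⟩ := hSstar
  set f : ℝ → ℝ := fun S => M * S / (K + S + a * S^2) with hf
  -- first: K < a * S_in ^ 2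
  have hKS : K < a * S_in ^ 2 := by
    by_contra hcon
    push_neg at hcon
    have : a * (Sstar * S_in) < K := by nlinarith
    have h1 : μ Sstar < μ S_in := by
      rw [hμ Sstar hS0.le, hμ S_in hSin.le]
      exact haldane_mono M K a hM hK ha _ _ hS0.le hSlt this
    nlinarith [mul_lt_mul_of_pos_left h1 hp0]
  set Sm : ℝ := Real.sqrt (K / a) with hSm
  have hSm0 : 0 < Sm := Real.sqrt_pos.mpr (by positivity)
  have hSmsq : a * Sm ^ 2 = K := by
    rw [hSm, Real.sq_sqrt (by positivity : (0:ℝ) ≤ K / a)]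
    field_simp
  have hSmlt : Sm < S_in := by
    by_contra hcon
    push_neg at hcon
    have h2 : a * S_in ^ 2 ≤ a * Sm ^ 2 :=
      mul_le_mul_of_nonneg_left (pow_le_pow_left₀ hSin.le hcon 2) ha.le
    linarith
  set t : ℝ := max Sstar Sm with ht
  have ht0 : 0 < t := lt_max_of_lt_right hSm0
  have htlt : t < S_in := max_lt hSlt hSmlt
  have hμt : μ Sstar ≤ μ t := by
    rcases le_or_gt Sm Sstar with hc | hc
    · rw [ht, max_eq_left hc]
    · rw [ht, max_eq_right hc.le, hμ Sstar hS0.le, hμ Sm hSm0.le]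
      exact le_of_lt (haldane_mono M K a hM hK ha _ _ hS0.le hc
        (by nlinarith))
  -- continuity of μ on [t, S_in]
  have hcont : ContinuousOn (fun S => p0 * μ S) (Set.Icc t S_in) := by
    have : ContinuousOn (fun S => p0 * f S) (Set.Icc t S_in) := by
      apply ContinuousOn.mul continuousOn_const
      apply ContinuousOn.div (by fun_prop) (by fun_prop)
      intro x hx
      have hx0 : 0 < x := lt_of_lt_of_le ht0 hx.1
      positivity
    refine this.congr fun x hx => ?_
    simp only [hμ x (le_of_lt (lt_of_lt_of_le ht0 hx.1)), hf]
  set c : ℝ := (b + p0 * μ S_in) / 2 with hc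
  have hc1 : p0 * μ S_in < c := by rw [hc]; linarith
  have hc2 : c < b := by rw [hc]; linarith
  have hct : c < p0 * μ t := by
    have : b + Dstar ≤ p0 * μ t := by
      rw [← heq]; exact mul_le_mul_of_nonneg_left hμt hp0.le
    linarith
  have hIVT := intermediate_value_Ioo' htlt.le hcont
  have hcmem : c ∈ Set.Ioo (p0 * μ S_in) (p0 * μ t) := ⟨hc1, hct⟩
  obtain ⟨Sbar, hSbar, hSbarc⟩ := hIVT hcmem
  simp only [] at hSbarc
  change p0 * μ Sbar = c at hSbarc
  refine ⟨Sbar, ⟨lt_of_le_of_lt (le_max_left _ _) hSbar.1, hSbar.2⟩, ?_, ?_, ?_⟩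
  · rw [hSbarc]; exact hc1
  · rw [hSbarc]; exact hc2
  · intro S hS
    have hSgtSm : Sm < S := lt_of_le_of_lt (le_max_right _ _)
      (lt_of_lt_of_le hSbar.1 hS.1)
    have hSpos : 0 < S := hSm0.trans hSgtSm
    have hden : 0 < K + S + a * S^2 := by positivity
    have hμf : μ =ᶠ[nhds S] f := by
      filter_upwards [Ioi_mem_nhds hSpos] with x hx
      exact hμ x (le_of_lt hx)
    rw [hμf.deriv_eq]
    have hd : HasDerivAt (fun S => K + S + a * S^2) (0 + 1 + a * (2 * S^1)) S := by
      exact (((hasDerivAt_const S K).add (hasDerivAt_id S)).add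
        ((hasDerivAt_pow 2 S).const_mul a))
    have hn : HasDerivAt (fun S => M * S) (M * 1) S :=
      (hasDerivAt_id S).const_mul M
    have hdf : HasDerivAt f ((M * 1 * (K + S + a * S^2) - M * S * (0 + 1 + a * (2 * S^1)))
        / (K + S + a * S^2)^2) S := hn.div hd (by positivity)
    rw [hdf.deriv]
    apply div_nonpos_of_nonpos_of_nonneg _ (by positivity)
    have hKa : K < a * S ^ 2 := by
      have := mul_lt_mul_of_pos_left (pow_lt_pow_left₀ hSgtSm hSm0.le (n := 2) (by norm_num)) ha
      linarith
    ring_nf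
    nlinarith
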